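/- Let V be a vector space over a field, W a subspace, and S(W) a subsemigroup of L(W) with I_W ∈ S(W). Then L_{S(W)}(V) is unit-regular if and only if either (i) S(W) is a subgroup of Aut(W) and dim(V/W) is finite, or (ii) S(W) is unit-regular and W = V. -/

import Mathlib

open Set

/-- `S` is a subsemigroup of `L(M)` (closed under composition). -/
def LIsSubsemigroup {K M : Type*} [Field K] [AddCommGroup M] [Module K M]
    (S : Set (M →ₗ[K] M)) : Prop :=
  ∀ a ∈ S, ∀ b ∈ S, a ∘ₗ b ∈ S

/-- `S` is a subgroup of `Aut(M)`. -/
def LIsSubgroupOfAut {K M : Type*} [Field K] [AddCommGroup M] [Module K M]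
    (S : Set (M →ₗ[K] M)) : Prop :=
  LIsSubsemigroup S ∧ (∀ a ∈ S, Function.Bijective a) ∧ (LinearMap.id ∈ S) ∧
    ∀ a ∈ S, ∃ b ∈ S, a ∘ₗ b = LinearMap.id ∧ b ∘ₗ a = LinearMap.id

/-- `S` is a regular semigroup of linear maps: `∀ a ∈ S, ∃ b ∈ S, aba = a`
(composed left to right, i.e. `x ↦ a (b (a x))`). -/
def LIsRegularOn {K M : Type*} [Field K] [AddCommGroup M] [Module K M]
    (S : Set (M →ₗ[K] M)) : Prop :=
  ∀ a ∈ S, ∃ b ∈ S, a ∘ₗ b ∘ₗ a = a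

/-- `S` is an inverse semigroup of linear maps. -/
def LIsInverseOn {K M : Type*} [Field K] [AddCommGroup M] [Module K M]
    (S : Set (M →ₗ[K] M)) : Prop :=
  ∀ a ∈ S, ∃! b, b ∈ S ∧ a ∘ₗ b ∘ₗ a = a ∧ b ∘ₗ a ∘ₗ b = b

/-- `u` is a unit of the linear monoid `S`. -/
def LIsUnitOn {K M : Type*} [Field K] [AddCommGroup M] [Module K M]
    (S : Set (M →ₗ[K] M)) (u : M →ₗ[K] M) : Prop :=
  u ∈ S ∧ ∃ v ∈ S, u ∘ₗ v = LinearMap.id ∧ v ∘ₗ u = LinearMap.id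

/-- `a` is a unit-regular element of `S`. -/
def LUnitRegularElem {K M : Type*} [Field K] [AddCommGroup M] [Module K M]
    (S : Set (M →ₗ[K] M)) (a : M →ₗ[K] M) : Prop :=
  ∃ u, LIsUnitOn S u ∧ a ∘ₗ u ∘ₗ a = a

/-- `S` is a unit-regular linear monoid. -/
def LIsUnitRegularOn {K M : Type*} [Field K] [AddCommGroup M] [Module K M]
    (S : Set (M →ₗ[K] M)) : Prop :=
  ∀ a ∈ S, LUnitRegularElem S a

/-- `G` is a subgroup contained in the semigroup `S` of linear maps. -/
def LIsSubgroupIn {K M : Type*} [Field K] [AddCommGroup M] [Module K M]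
    (S G : Set (M →ₗ[K] M)) : Prop :=
  G ⊆ S ∧ (∀ a ∈ G, ∀ b ∈ G, a ∘ₗ b ∈ G) ∧
    ∃ e ∈ G, (∀ a ∈ G, a ∘ₗ e = a ∧ e ∘ₗ a = a) ∧
      ∀ a ∈ G, ∃ b ∈ G, a ∘ₗ b = e ∧ b ∘ₗ a = e

/-- `S` is a completely regular semigroup of linear maps: every element
belongs to a subgroup of `S`. -/
def LIsCompletelyRegularOn {K M : Type*} [Field K] [AddCommGroup M] [Module K M]
    (S : Set (M →ₗ[K] M)) : Prop :=
  ∀ a ∈ S, ∃ G, LIsSubgroupIn S G ∧ a ∈ G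

/-- The semigroup `L_{S(W)}(V)` of all linear self-maps of `V` that leave `W`
invariant and whose restriction to `W` lies in `S`. -/
def LSemi {K V : Type*} [Field K] [AddCommGroup V] [Module K V] (W : Submodule K V)
    (S : Set (W →ₗ[K] W)) : Set (V →ₗ[K] V) :=
  {f | ∃ h : ∀ x ∈ W, f x ∈ W, f.restrict h ∈ S}

/- ---------------------------------------------------------------------------
Auxiliary material for `stmt15`.
--------------------------------------------------------------------------- -/

namespace Stmt15Aux

/-- Any endomorphism of a finite-dimensional vector space is unit-regular in
`End`: there is a linear automorphism `e` with `d ∘ e ∘ d = d`. -/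
theorem exists_equiv_comp_eq {K U : Type*} [Field K] [AddCommGroup U] [Module K U]
    [FiniteDimensional K U] (d : U →ₗ[K] U) :
    ∃ e : U ≃ₗ[K] U, d ∘ₗ (e : U →ₗ[K] U) ∘ₗ d = d := by
  classical
  obtain ⟨N', hN'⟩ := Submodule.exists_isCompl (LinearMap.ker d)
  obtain ⟨R', hR'⟩ := Submodule.exists_isCompl (LinearMap.range d)
  let ψ : N' ≃ₗ[K] LinearMap.range d :=
    ((Submodule.quotientEquivOfIsCompl _ _ hN').symm).trans d.quotKerEquivRange
  have hψ : ∀ x : N', (ψ x : U) = d x := by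
    intro x
    simp only [ψ, LinearEquiv.trans_apply, Submodule.quotientEquivOfIsCompl_symm_apply,
      LinearMap.quotKerEquivRange_apply_mk]
  have hfr : Module.finrank K R' = Module.finrank K (LinearMap.ker d) := by
    have h1 := Submodule.finrank_add_eq_of_isCompl hR'
    have h2 := LinearMap.finrank_range_add_finrank_ker d
    omega
  let φ : R' ≃ₗ[K] LinearMap.ker d := LinearEquiv.ofFinrankEq _ _ hfr
  let e : U ≃ₗ[K] U :=
    ((Submodule.prodEquivOfIsCompl _ _ hR').symm.trans
      ((ψ.symm.prodCongr φ).trans (Submodule.prodEquivOfIsCompl N' (LinearMap.ker d) hN'.symm)))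
  refine ⟨e, ?_⟩
  ext x
  have hdx : d x ∈ LinearMap.range d := ⟨x, rfl⟩
  have h1 := Submodule.prodEquivOfIsCompl_symm_apply_left (LinearMap.range d) R' hR'
    (⟨d x, hdx⟩ : LinearMap.range d)
  rw [show ((⟨d x, hdx⟩ : LinearMap.range d) : U) = d x from rfl] at h1
  simp only [LinearMap.comp_apply, LinearEquiv.coe_coe, e, LinearEquiv.trans_apply, h1,
    LinearEquiv.prodCongr_apply, map_zero, Submodule.coe_prodEquivOfIsCompl', Submodule.coe_add,
    ZeroMemClass.coe_zero, add_zero, map_add]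
  rw [← hψ (ψ.symm ⟨d x, hdx⟩), LinearEquiv.apply_symm_apply]

/-- On an infinite type there is an injective non-surjective self-map. -/
theorem exists_inj_not_surj_fun {ι : Type*} [Infinite ι] :
    ∃ t : ι → ι, Function.Injective t ∧ ¬ Function.Surjective t := by
  classical
  let e := Infinite.natEmbedding ι
  refine ⟨fun x => if h : ∃ k, e k = x then e (h.choose + 1) else x, ?_, ?_⟩
  · intro x y hxy
    by_cases hx : ∃ k, e k = x <;> by_cases hy : ∃ k, e k = y <;>
      simp only [hx, hy, dif_pos, dif_neg, not_false_iff] at hxy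
    · have := e.injective hxy
      rw [← hx.choose_spec, ← hy.choose_spec, Nat.succ_injective this]
    · exact absurd ⟨_, hxy⟩ hy
    · exact absurd ⟨_, hxy.symm⟩ hx
    · exact hxy
  · intro hs
    obtain ⟨x, hx⟩ := hs (e 0)
    by_cases h : ∃ k, e k = x <;> simp only [h, dif_pos, dif_neg, not_false_iff] at hx
    · exact Nat.succ_ne_zero _ (e.injective hx)
    · exact h ⟨0, hx.symm⟩

/-- On an infinite-dimensional vector space there is an injective
non-surjective endomorphism. -/
theorem exists_inj_not_surj {K U : Type*} [Field K] [AddCommGroup U] [Module K U]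
    (h : ¬ FiniteDimensional K U) :
    ∃ d : U →ₗ[K] U, Function.Injective d ∧ ¬ Function.Surjective d := by
  classical
  let b := Module.Basis.ofVectorSpace K U
  have : Infinite (Module.Basis.ofVectorSpaceIndex K U) := by
    rw [← not_finite_iff_infinite]
    intro hf
    exact h (haveI := hf; Module.Finite.of_basis b)
  obtain ⟨t, ht, hts⟩ := exists_inj_not_surj_fun (ι := Module.Basis.ofVectorSpaceIndex K U)
  refine ⟨(b.repr.symm.toLinearMap ∘ₗ Finsupp.lmapDomain K K t) ∘ₗ b.repr.toLinearMap, ?_, ?_⟩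
  · exact b.repr.symm.injective.comp ((Finsupp.mapDomain_injective ht).comp b.repr.injective)
  · intro hs
    obtain ⟨i₀, hi₀⟩ := not_forall.mp hts
    obtain ⟨x, hx⟩ := hs (b.repr.symm (Finsupp.single i₀ 1))
    apply_fun b.repr at hx
    simp only [LinearMap.comp_apply, LinearEquiv.coe_coe, LinearEquiv.apply_symm_apply] at hx
    have hmem : i₀ ∈ (Finsupp.mapDomain t (b.repr x)).support := by
      rw [show (Finsupp.lmapDomain K K t) (b.repr x) = Finsupp.mapDomain t (b.repr x) from rfl] at hx
      rw [hx]
      simp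
    have := Finsupp.mapDomain_support hmem
    simp only [Finset.mem_image] at this
    obtain ⟨j, _, hj⟩ := this
    exact hi₀ ⟨j, hj⟩

variable {K V : Type*} [Field K] [AddCommGroup V] [Module K V]
variable (W U : Submodule K V)

/-- A "lower triangular" endomorphism of `W × U`. -/
def tri (a : W →ₗ[K] W) (c : U →ₗ[K] W) (d : U →ₗ[K] U) : (W × U) →ₗ[K] (W × U) :=
  LinearMap.prod (a ∘ₗ LinearMap.fst K W U + c ∘ₗ LinearMap.snd K W U)
    (d ∘ₗ LinearMap.snd K W U)

@[simp] lemma tri_apply (a : W →ₗ[K] W) (c : U →ₗ[K] W) (d : U →ₗ[K] U) (x : W × U) :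
    tri W U a c d x = (a x.1 + c x.2, d x.2) := rfl

variable {W U}

lemma tri_eq_tri {a a' : W →ₗ[K] W} {c c' : U →ₗ[K] W} {d d' : U →ₗ[K] U}
    (h1 : ∀ x, a x = a' x) (h2 : ∀ x, c x = c' x) (h3 : ∀ x, d x = d' x) :
    tri W U a c d = tri W U a' c' d' := by
  have e1 : a = a' := LinearMap.ext h1
  have e2 : c = c' := LinearMap.ext h2
  have e3 : d = d' := LinearMap.ext h3
  rw [e1, e2, e3]

lemma tri_comp (a a' : W →ₗ[K] W) (c c' : U →ₗ[K] W) (d d' : U →ₗ[K] U) :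
    tri W U a c d ∘ₗ tri W U a' c' d' =
      tri W U (a ∘ₗ a') (a ∘ₗ c' + c ∘ₗ d') (d ∘ₗ d') := by
  ext x <;> simp

lemma tri_id : tri W U LinearMap.id 0 LinearMap.id = LinearMap.id := by
  ext x <;> simp

lemma tri_injective {a a' : W →ₗ[K] W} {c c' : U →ₗ[K] W} {d d' : U →ₗ[K] U}
    (h : tri W U a c d = tri W U a' c' d') : a = a' ∧ c = c' ∧ d = d' := by
  refine ⟨LinearMap.ext fun w => ?_, LinearMap.ext fun u => ?_, LinearMap.ext fun u => ?_⟩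
  · have := congrArg (fun f => (f (w, 0)).1) h; simpa using this
  · have := congrArg (fun f => (f (0, u)).1) h; simpa using this
  · have := congrArg (fun f => (f (0, u)).2) h; simpa using this

variable (hWU : IsCompl W U)

/-- Conjugating an endomorphism of `W × U` to one of `V`. -/
noncomputable def toV (G : (W × U) →ₗ[K] (W × U)) : V →ₗ[K] V :=
  (Submodule.prodEquivOfIsCompl W U hWU : (W × U) →ₗ[K] V) ∘ₗ G ∘ₗ
    ((Submodule.prodEquivOfIsCompl W U hWU).symm : V →ₗ[K] (W × U))

lemma toV_comp (G H : (W × U) →ₗ[K] (W × U)) :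
    toV hWU (G ∘ₗ H) = toV hWU G ∘ₗ toV hWU H := by
  ext x
  simp [toV]

lemma toV_id : toV hWU LinearMap.id = LinearMap.id := by
  ext x
  show (Submodule.prodEquivOfIsCompl W U hWU)
    ((Submodule.prodEquivOfIsCompl W U hWU).symm x) = x
  exact (Submodule.prodEquivOfIsCompl W U hWU).apply_symm_apply x

lemma toV_injective : Function.Injective (toV (K := K) hWU) := by
  intro G H h
  have key : ∀ G : (W × U) →ₗ[K] (W × U), ∀ z,
      (Submodule.prodEquivOfIsCompl W U hWU).symm
        (toV hWU G (Submodule.prodEquivOfIsCompl W U hWU z)) = G z := by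
    intro G z; simp [toV]
  apply LinearMap.ext; intro z
  rw [← key G z, ← key H z, h]

lemma toV_tri_apply_coe (a : W →ₗ[K] W) (c : U →ₗ[K] W) (d : U →ₗ[K] U) (w : W) :
    toV hWU (tri W U a c d) (w : V) = (a w : V) := by
  have h1 : (Submodule.prodEquivOfIsCompl W U hWU).symm (w : V) = (w, 0) :=
    Submodule.prodEquivOfIsCompl_symm_apply_left W U hWU w
  simp [toV, h1]

lemma toV_tri_mem {S : Set (W →ₗ[K] W)} {a : W →ₗ[K] W} (c : U →ₗ[K] W) (d : U →ₗ[K] U)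
    (ha : a ∈ S) : toV hWU (tri W U a c d) ∈ LSemi W S := by
  have hmap : ∀ x ∈ W, toV hWU (tri W U a c d) x ∈ W := by
    intro x hx
    rw [show x = ((⟨x, hx⟩ : W) : V) from rfl, toV_tri_apply_coe]
    exact (a ⟨x, hx⟩).2
  refine ⟨hmap, ?_⟩
  have : (toV hWU (tri W U a c d)).restrict hmap = a := by
    apply LinearMap.ext; intro w
    apply Subtype.ext
    rw [show ((toV hWU (tri W U a c d)).restrict hmap w : V)
      = toV hWU (tri W U a c d) (w : V) from rfl, toV_tri_apply_coe]
  rw [this]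
  exact ha

lemma exists_tri (f : V →ₗ[K] V) (hf : ∀ x ∈ W, f x ∈ W) :
    ∃ (c : U →ₗ[K] W) (d : U →ₗ[K] U),
      f = toV hWU (tri W U (f.restrict hf) c d) := by
  set E := Submodule.prodEquivOfIsCompl W U hWU with hEdef
  set F : (W × U) →ₗ[K] (W × U) :=
    (E.symm : V →ₗ[K] (W × U)) ∘ₗ f ∘ₗ (E : (W × U) →ₗ[K] V) with hFdef
  refine ⟨LinearMap.fst K W U ∘ₗ F ∘ₗ LinearMap.inr K W U,
          LinearMap.snd K W U ∘ₗ F ∘ₗ LinearMap.inr K W U, ?_⟩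
  have hFf : toV hWU F = f := by
    apply LinearMap.ext; intro x
    show E (E.symm (f (E (E.symm x)))) = f x
    rw [E.apply_symm_apply, E.apply_symm_apply]
  have hFt : F = tri W U (f.restrict hf)
      (LinearMap.fst K W U ∘ₗ F ∘ₗ LinearMap.inr K W U)
      (LinearMap.snd K W U ∘ₗ F ∘ₗ LinearMap.inr K W U) := by
    apply LinearMap.ext; intro z
    have hz : z = ((z.1, 0) : W × U) + (0, z.2) := by simp
    have h1 : F ((z.1, 0) : W × U) = ((f.restrict hf) z.1, 0) := by
      show E.symm (f (E ((z.1, 0) : W × U))) = _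
      have h2 : E ((z.1, (0 : U))) = (z.1 : V) := by
        rw [hEdef]; simp
      rw [h2, show f (z.1 : V) = ((f.restrict hf) z.1 : V) from rfl, hEdef]
      exact Submodule.prodEquivOfIsCompl_symm_apply_left W U hWU _
    conv_lhs => rw [hz, map_add, h1]
    show ((f.restrict hf) z.1, (0 : U)) + F (0, z.2)
        = ((f.restrict hf) z.1 + (F ((0, z.2) : W × U)).1, (F ((0, z.2) : W × U)).2)
    rw [Prod.ext_iff]
    constructor
    · show (f.restrict hf) z.1 + (F ((0, z.2) : W × U)).1 = _
      rfl
    · show (0 : U) + (F ((0, z.2) : W × U)).2 = _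
      rw [zero_add]
  rw [← hFt]
  exact hFf.symm

lemma isUnitOn_toV_tri {S : Set (W →ₗ[K] W)} {a a' : W →ₗ[K] W} (c : U →ₗ[K] W)
    {e e' : U →ₗ[K] U} (ha : a ∈ S) (ha' : a' ∈ S)
    (h1 : a ∘ₗ a' = LinearMap.id) (h2 : a' ∘ₗ a = LinearMap.id)
    (h3 : e ∘ₗ e' = LinearMap.id) (h4 : e' ∘ₗ e = LinearMap.id) :
    LIsUnitOn (LSemi W S) (toV hWU (tri W U a c e)) := by
  have p1 : ∀ w, a (a' w) = w := fun w => by simpa using DFunLike.congr_fun h1 w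
  have p2 : ∀ w, a' (a w) = w := fun w => by simpa using DFunLike.congr_fun h2 w
  have p3 : ∀ x, e (e' x) = x := fun x => by simpa using DFunLike.congr_fun h3 x
  have p4 : ∀ x, e' (e x) = x := fun x => by simpa using DFunLike.congr_fun h4 x
  refine ⟨toV_tri_mem hWU c e ha, toV hWU (tri W U a' (-(a' ∘ₗ c ∘ₗ e')) e'),
    toV_tri_mem hWU _ _ ha', ?_, ?_⟩
  · rw [← toV_comp, tri_comp, ← toV_id hWU, ← tri_id]
    refine congrArg (toV hWU) ?_
    refine tri_eq_tri (fun w => by simp [p1]) (fun x => ?_) (fun x => by simp [p3])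
    simp [p1]
  · rw [← toV_comp, tri_comp, ← toV_id hWU, ← tri_id]
    refine congrArg (toV hWU) ?_
    refine tri_eq_tri (fun w => by simp [p2]) (fun x => ?_) (fun x => by simp [p4])
    simp [p4]

end Stmt15Aux

open Stmt15Aux in
theorem stmt15 {K V : Type*} [Field K] [AddCommGroup V] [Module K V]
    (W : Submodule K V) (S : Set (W →ₗ[K] W)) (hS : LIsSubsemigroup S)
    (hid : LinearMap.id ∈ S) :
    LIsUnitRegularOn (LSemi W S) ↔
      ((LIsSubgroupOfAut S ∧ Module.Finite K (V ⧸ W)) ∨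
       (LIsUnitRegularOn S ∧ W = ⊤)) := by
  classical
  obtain ⟨U, hU⟩ := Submodule.exists_isCompl W
  constructor
  · intro hT
    -- Key extraction: the unit-regularity of `LSemi W S` in triangular form.
    have key : ∀ a ∈ S, ∀ (c : U →ₗ[K] W) (d : U →ₗ[K] U),
        ∃ s ∈ S, ∃ (cu : U →ₗ[K] W) (e : U →ₗ[K] U),
          (∃ s' ∈ S, s ∘ₗ s' = LinearMap.id ∧ s' ∘ₗ s = LinearMap.id) ∧
          (∃ e' : U →ₗ[K] U, e ∘ₗ e' = LinearMap.id ∧ e' ∘ₗ e = LinearMap.id) ∧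
          tri W U a c d ∘ₗ tri W U s cu e ∘ₗ tri W U a c d = tri W U a c d := by
      intro a ha c d
      obtain ⟨u, ⟨huT, v, hvT, huv, hvu⟩, hfuf⟩ := hT _ (toV_tri_mem hU c d ha)
      obtain ⟨hu, hus⟩ := huT
      obtain ⟨cu, eu, hueq⟩ := exists_tri hU u hu
      obtain ⟨hv, hvs⟩ := hvT
      obtain ⟨cv, ev, hveq⟩ := exists_tri hU v hv
      have huv' : tri W U (u.restrict hu ∘ₗ v.restrict hv)
          (u.restrict hu ∘ₗ cv + cu ∘ₗ ev) (eu ∘ₗ ev)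
          = tri W U LinearMap.id 0 LinearMap.id := by
        apply toV_injective hU
        rw [← tri_comp, toV_comp, ← hueq, ← hveq, tri_id, toV_id hU]
        exact huv
      have hvu' : tri W U (v.restrict hv ∘ₗ u.restrict hu)
          (v.restrict hv ∘ₗ cu + cv ∘ₗ eu) (ev ∘ₗ eu)
          = tri W U LinearMap.id 0 LinearMap.id := by
        apply toV_injective hU
        rw [← tri_comp, toV_comp, ← hueq, ← hveq, tri_id, toV_id hU]
        exact hvu
      obtain ⟨hs1, -, he1⟩ := tri_injective huv'
      obtain ⟨hs2, -, he2⟩ := tri_injective hvu'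
      refine ⟨u.restrict hu, hus, cu, eu, ⟨v.restrict hv, hvs, hs1, hs2⟩,
        ⟨ev, he1, he2⟩, ?_⟩
      apply toV_injective hU
      rw [toV_comp, toV_comp, ← hueq]
      exact hfuf
    -- `S` is unit-regular.
    have hSur : LIsUnitRegularOn S := by
      intro a ha
      obtain ⟨s, hs, cu, e, ⟨s', hs', hss', hs's⟩, -, htri⟩ := key a ha 0 LinearMap.id
      rw [tri_comp, tri_comp] at htri
      obtain ⟨h1, -, -⟩ := tri_injective htri
      exact ⟨s, ⟨hs, s', hs', hss', hs's⟩, h1⟩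
    -- `V ⧸ W` is finite-dimensional.
    have hFinU : FiniteDimensional K U := by
      by_contra hinf
      obtain ⟨d, hdi, hds⟩ := exists_inj_not_surj hinf
      obtain ⟨s, hs, cu, e, -, ⟨e', hee', he'e⟩, htri⟩ := key LinearMap.id hid 0 d
      rw [tri_comp, tri_comp] at htri
      obtain ⟨-, -, h3⟩ := tri_injective htri
      have hed : ∀ x, e (d x) = x := by
        intro x
        apply hdi
        have := DFunLike.congr_fun h3 x
        simpa using this
      have hde : ∀ z, d z = e' z := by
        intro z
        have h6 := DFunLike.congr_fun he'e (d z)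
        simp only [LinearMap.comp_apply, LinearMap.id_apply] at h6
        rw [hed z] at h6
        exact h6.symm
      apply hds
      intro y
      refine ⟨e y, ?_⟩
      rw [hde (e y)]
      have := DFunLike.congr_fun he'e y
      simpa using this
    have hFinQ : Module.Finite K (V ⧸ W) :=
      Module.Finite.equiv (Submodule.quotientEquivOfIsCompl W U hU).symm
    by_cases hW : W = ⊤
    · exact Or.inr ⟨hSur, hW⟩
    · -- `W ≠ ⊤` : show `S` is a subgroup of `Aut W`.
      left
      have hUne : U ≠ ⊥ := by
        intro hUb
        apply hW
        have := hU.codisjoint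
        rw [hUb, codisjoint_bot] at this
        exact this
      obtain ⟨x₀, hx₀U, hx₀⟩ := Submodule.exists_mem_ne_zero_of_ne_bot hUne
      set u₀ : U := ⟨x₀, hx₀U⟩ with hu₀def
      have hu₀ : u₀ ≠ 0 := by
        intro h
        exact hx₀ (by rw [← Submodule.coe_zero (p := U), ← h])
      -- every element of `S` is surjective
      have hsurj : ∀ a ∈ S, Function.Surjective a := by
        intro a ha
        by_contra hns
        obtain ⟨w₀, hw₀⟩ := not_forall.mp hns
        obtain ⟨C, hC⟩ := Submodule.exists_isCompl (K ∙ u₀ : Submodule K U)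
        set c : U →ₗ[K] W := (LinearMap.toSpanSingleton K W w₀) ∘ₗ
          ((LinearEquiv.coord K U u₀ hu₀ : (K ∙ u₀) ≃ₗ[K] K) : (K ∙ u₀) →ₗ[K] K) ∘ₗ
          (Submodule.linearProjOfIsCompl _ C hC) with hcdef
        have hcu₀ : c u₀ = w₀ := by
          have h1 : (Submodule.linearProjOfIsCompl _ C hC) u₀ =
              (⟨u₀, Submodule.mem_span_singleton_self u₀⟩ : K ∙ u₀) :=
            Submodule.linearProjOfIsCompl_apply_left hC
              ⟨u₀, Submodule.mem_span_singleton_self u₀⟩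
          rw [hcdef]
          simp only [LinearMap.comp_apply, h1, LinearEquiv.coe_coe, LinearEquiv.coord_self,
            LinearMap.toSpanSingleton_apply_one]
        obtain ⟨s, hs, cu, e, -, -, htri⟩ := key a ha c 0
        rw [tri_comp, tri_comp] at htri
        obtain ⟨-, h2, -⟩ := tri_injective htri
        have h5 := DFunLike.congr_fun h2 u₀
        simp only [LinearMap.add_apply, LinearMap.comp_apply, LinearMap.zero_apply,
          map_zero, add_zero] at h5
        rw [hcu₀] at h5
        exact hw₀ ⟨s w₀, h5⟩
      -- every element of `S` is bijective with inverse in `S`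
      have hinv : ∀ a ∈ S, ∃ b ∈ S,
          (a ∘ₗ b = LinearMap.id ∧ b ∘ₗ a = LinearMap.id) ∧ Function.Bijective a := by
        intro a ha
        obtain ⟨s, hs, cu, e, ⟨s', hs', hss', hs's⟩, -, htri⟩ := key a ha 0 LinearMap.id
        rw [tri_comp, tri_comp] at htri
        obtain ⟨h1, -, -⟩ := tri_injective htri
        have has : a ∘ₗ s = LinearMap.id := by
          apply LinearMap.ext; intro y
          obtain ⟨x, rfl⟩ := hsurj a ha y
          simpa using DFunLike.congr_fun h1 x
        have has' : a = s' := by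
          have h7 : a ∘ₗ (s ∘ₗ s') = a := by rw [hss', LinearMap.comp_id]
          calc a = a ∘ₗ (s ∘ₗ s') := h7.symm
          _ = (a ∘ₗ s) ∘ₗ s' := by rw [LinearMap.comp_assoc]
          _ = s' := by rw [has, LinearMap.id_comp]
        have hsa : s ∘ₗ a = LinearMap.id := by rw [has']; exact hss'
        refine ⟨s, hs, ⟨has, hsa⟩, ?_, hsurj a ha⟩
        intro x y hxy
        have hx := DFunLike.congr_fun hsa x
        have hy := DFunLike.congr_fun hsa y
        simp only [LinearMap.comp_apply, LinearMap.id_apply] at hx hy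
        rw [← hx, ← hy, hxy]
      refine ⟨⟨hS, fun a ha => (hinv a ha).choose_spec.2.2, hid, fun a ha => ?_⟩, hFinQ⟩
      obtain ⟨b, hb, ⟨hab, hba⟩, -⟩ := hinv a ha
      exact ⟨b, hb, hab, hba⟩
  · rintro (⟨hG, hFin⟩ | ⟨hSur, hW⟩)
    · -- case (i): `S ≤ Aut W` and `V ⧸ W` finite-dimensional
      haveI := hFin
      haveI : FiniteDimensional K U :=
        Module.Finite.equiv (Submodule.quotientEquivOfIsCompl W U hU)
      intro f hfT
      obtain ⟨hf, hfs⟩ := hfT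
      obtain ⟨c, d, hfeq⟩ := exists_tri hU f hf
      obtain ⟨a', ha', haa', ha'a⟩ := hG.2.2.2 (f.restrict hf) hfs
      obtain ⟨e, hde⟩ := exists_equiv_comp_eq d
      have hee' : (e : U →ₗ[K] U) ∘ₗ (e.symm : U →ₗ[K] U) = LinearMap.id := by
        apply LinearMap.ext; intro x; simp
      have he'e : (e.symm : U →ₗ[K] U) ∘ₗ (e : U →ₗ[K] U) = LinearMap.id := by
        apply LinearMap.ext; intro x; simp
      refine ⟨toV hU (tri W U a' (-(a' ∘ₗ c ∘ₗ (e : U →ₗ[K] U))) (e : U →ₗ[K] U)),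
        isUnitOn_toV_tri hU _ ha' hfs ha'a haa' hee' he'e, ?_⟩
      have p1 : ∀ w, f.restrict hf (a' w) = w := fun w => by
        simpa using DFunLike.congr_fun haa' w
      have p2 : ∀ w, a' (f.restrict hf w) = w := fun w => by
        simpa using DFunLike.congr_fun ha'a w
      have p3 : ∀ x, d (e (d x)) = d x := fun x => by
        simpa using DFunLike.congr_fun hde x
      conv_lhs => rw [hfeq]
      conv_rhs => rw [hfeq]
      rw [← toV_comp, ← toV_comp]
      refine congrArg (toV hU) ?_
      rw [tri_comp, tri_comp]
      refine tri_eq_tri (fun w => by simp [p2, p1]) (fun x => ?_) (fun x => by simp [p3])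
      simp [p2, p1]
    · -- case (ii): `S` unit-regular and `W = ⊤`
      have hUbot : U = ⊥ := by
        have := hU.disjoint
        rw [hW] at this
        exact disjoint_top.mp this.symm
      subst hUbot
      haveI : Subsingleton (↥(⊥ : Submodule K V)) := by
        constructor
        intro x y
        apply Subtype.ext
        have hx := x.2
        have hy := y.2
        rw [Submodule.mem_bot] at hx hy
        rw [hx, hy]
      intro f hfT
      obtain ⟨hf, hfs⟩ := hfT
      obtain ⟨c, d, hfeq⟩ := exists_tri hU f hf
      obtain ⟨s, ⟨hsS, s', hs'S, hss', hs's⟩, hasa⟩ := hSur (f.restrict hf) hfs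
      have hidid : (LinearMap.id : (⊥ : Submodule K V) →ₗ[K] (⊥ : Submodule K V)) ∘ₗ
          LinearMap.id = LinearMap.id := by rw [LinearMap.comp_id]
      refine ⟨toV hU (tri W ⊥ s 0 LinearMap.id),
        isUnitOn_toV_tri hU 0 hsS hs'S hss' hs's hidid hidid, ?_⟩
      conv_lhs => rw [hfeq]
      conv_rhs => rw [hfeq]
      rw [← toV_comp, ← toV_comp]
      refine congrArg (toV hU) ?_
      rw [tri_comp, tri_comp]
      refine tri_eq_tri (fun w => by simpa using DFunLike.congr_fun hasa w)
        (fun x => ?_) (fun x => Subsingleton.elim _ _)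
      rw [Subsingleton.elim x (0 : ↥(⊥ : Submodule K V))]
      simp
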